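/- Let f ∈ 𝓢(ℝ²), and for n ∈ ℤ and t > 0 define the Fourier coefficient f_n(t) = (1/(2π)) ∫_0^{2π} f(t cos θ, t sin θ) e^{inθ} dθ. Then for every k, l ∈ ℕ and every σ > 0 there exist a constant C > 0 and a finite family of Schwartz seminorms on 𝓢(ℝ²) with maximum S*, both independent of n, such that for every n ∈ ℤ with n ≠ 0 and every t > 0: t^{σ+k} |f_n^{(k)}(t)| ≤ C · |n|^{−l} · S*(f). -/

import Mathlib

open MeasureTheory
open scoped ContDiff

noncomputable section Stmt13Aux

namespace Stmt13

/-- Directional derivative operator. -/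
def pd (v : ℝ × ℝ) (G : ℝ × ℝ → ℂ) : ℝ × ℝ → ℂ := fun p => fderiv ℝ G p v

theorem pd_contDiff {G : ℝ × ℝ → ℂ} (hG : ContDiff ℝ ∞ G) (v : ℝ × ℝ) :
    ContDiff ℝ ∞ (pd v G) := by
  have h1 : ContDiff ℝ ∞ (fderiv ℝ G) := hG.fderiv_right (by simp)
  exact (ContinuousLinearMap.apply ℝ ℂ v).contDiff.comp h1

theorem norm_iFD_pd_le {G : ℝ × ℝ → ℂ} (hG : ContDiff ℝ ∞ G) (v : ℝ × ℝ) (r : ℕ) (p : ℝ × ℝ) :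
    ‖iteratedFDeriv ℝ r (pd v G) p‖ ≤ ‖v‖ * ‖iteratedFDeriv ℝ (r + 1) G p‖ := by
  have h1 : ContDiff ℝ ∞ (fderiv ℝ G) := hG.fderiv_right (by simp)
  have h2 : iteratedFDeriv ℝ r (pd v G) p =
      (ContinuousLinearMap.apply ℝ ℂ v).compContinuousMultilinearMap
        (iteratedFDeriv ℝ r (fderiv ℝ G) p) :=
    (ContinuousLinearMap.apply ℝ ℂ v).iteratedFDeriv_comp_left h1.contDiffAt (by exact_mod_cast le_top)
  rw [h2, ← norm_iteratedFDeriv_fderiv]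
  refine le_trans (ContinuousLinearMap.norm_compContinuousMultilinearMap_le _ _) ?_
  gcongr
  refine ContinuousLinearMap.opNorm_le_bound _ (norm_nonneg v) (fun L => ?_)
  exact (L.le_opNorm v).trans_eq (mul_comm _ _)

theorem pd_iterate_contDiff (v : ℝ × ℝ) (m : ℕ) :
    ∀ {G : ℝ × ℝ → ℂ}, ContDiff ℝ ∞ G → ContDiff ℝ ∞ ((pd v)^[m] G) := by
  induction m with
  | zero => intro G hG; simpa using hG
  | succ m ih =>
    intro G hG
    rw [Function.iterate_succ_apply]
    exact ih (pd_contDiff hG v)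

theorem norm_iFD_pd_iterate_le (v : ℝ × ℝ) (hv : ‖v‖ ≤ 1) (m : ℕ) :
    ∀ {G : ℝ × ℝ → ℂ}, ContDiff ℝ ∞ G → ∀ (r : ℕ) (p : ℝ × ℝ),
      ‖iteratedFDeriv ℝ r ((pd v)^[m] G) p‖ ≤ ‖iteratedFDeriv ℝ (r + m) G p‖ := by
  induction m with
  | zero => intro G _ r p; simp
  | succ m ih =>
    intro G hG r p
    rw [Function.iterate_succ_apply]
    refine le_trans (ih (pd_contDiff hG v) r p) ?_
    refine le_trans (norm_iFD_pd_le hG v (r + m) p) ?_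
    calc ‖v‖ * ‖iteratedFDeriv ℝ (r + m + 1) G p‖
        ≤ 1 * ‖iteratedFDeriv ℝ (r + m + 1) G p‖ :=
          mul_le_mul_of_nonneg_right hv (norm_nonneg _)
      _ = ‖iteratedFDeriv ℝ (r + (m + 1)) G p‖ := by rw [one_mul, show r + (m+1) = r + m + 1 from rfl]

theorem hasDerivAt_line1 {H : ℝ × ℝ → ℂ} (hH : ContDiff ℝ ∞ H) (t θ : ℝ) :
    HasDerivAt (fun s => H (s, θ)) (pd (1, 0) H (t, θ)) t := by
  have h1 : HasFDerivAt H (fderiv ℝ H (t, θ)) (t, θ) :=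
    (hH.differentiable (by simp) (t, θ)).hasFDerivAt
  have h2 : HasDerivAt (fun s : ℝ => (s, θ)) ((1 : ℝ), (0 : ℝ)) t :=
    (hasDerivAt_id t).prodMk (hasDerivAt_const t θ)
  exact h1.comp_hasDerivAt t h2

theorem hasDerivAt_line2 {H : ℝ × ℝ → ℂ} (hH : ContDiff ℝ ∞ H) (t θ : ℝ) :
    HasDerivAt (fun φ => H (t, φ)) (pd (0, 1) H (t, θ)) θ := by
  have h1 : HasFDerivAt H (fderiv ℝ H (t, θ)) (t, θ) :=
    (hH.differentiable (by simp) (t, θ)).hasFDerivAt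
  have h2 : HasDerivAt (fun φ : ℝ => (t, φ)) ((0 : ℝ), (1 : ℝ)) θ :=
    (hasDerivAt_const θ t).prodMk (hasDerivAt_id θ)
  exact h1.comp_hasDerivAt θ h2

theorem pd_periodic {G : ℝ × ℝ → ℂ} (hG : ContDiff ℝ ∞ G)
    (hper : ∀ p : ℝ × ℝ, G (p + (0, 2 * Real.pi)) = G p) (v : ℝ × ℝ) :
    ∀ p : ℝ × ℝ, pd v G (p + (0, 2 * Real.pi)) = pd v G p := by
  intro p
  have hGeq : (fun q => G (q + (0, 2 * Real.pi))) = G := funext hper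
  have h1 : HasFDerivAt G (fderiv ℝ G (p + (0, 2 * Real.pi))) (p + (0, 2 * Real.pi)) :=
    (hG.differentiable (by simp) _).hasFDerivAt
  have h2 : HasFDerivAt (fun q => G (q + (0, 2 * Real.pi)))
      (fderiv ℝ G (p + (0, 2 * Real.pi))) p := by
    have h3 := h1.comp p ((hasFDerivAt_id p).add_const (0, 2 * Real.pi))
    simp only [ContinuousLinearMap.comp_id] at h3
    exact h3
  rw [hGeq] at h2
  show fderiv ℝ G (p + (0, 2 * Real.pi)) v = fderiv ℝ G p v
  rw [h2.fderiv]

theorem trig_bound : ∀ (j : ℕ) (θ : ℝ), |iteratedDeriv j Real.cos θ| ≤ 1 ∧ |iteratedDeriv j Real.sin θ| ≤ 1 := by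
  intro j
  induction j with
  | zero => intro θ; simp [Real.abs_cos_le_one, Real.abs_sin_le_one]
  | succ m ih =>
    intro θ
    refine ⟨?_, ?_⟩
    · rw [iteratedDeriv_succ', Real.deriv_cos', iteratedDeriv_fun_neg m Real.sin θ, abs_neg]
      exact (ih θ).2
    · rw [iteratedDeriv_succ', Real.deriv_sin]
      exact (ih θ).1

theorem iFD_comp_snd_le {h : ℝ → ℝ} (hh : ContDiff ℝ ∞ h) (hb : ∀ j θ, |iteratedDeriv j h θ| ≤ 1)
    (j : ℕ) (p : ℝ × ℝ) :
    ‖iteratedFDeriv ℝ j (fun q : ℝ × ℝ => h q.2) p‖ ≤ 1 := by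
  have hcomp : (fun q : ℝ × ℝ => h q.2) = h ∘ (ContinuousLinearMap.snd ℝ ℝ ℝ) := rfl
  rw [hcomp, (ContinuousLinearMap.snd ℝ ℝ ℝ).iteratedFDeriv_comp_right hh p
    (i := j) (by exact_mod_cast le_top)]
  refine le_trans (ContinuousMultilinearMap.norm_compContinuousLinearMap_le _ _) ?_
  have h1 : ‖iteratedFDeriv ℝ j h (((ContinuousLinearMap.snd ℝ ℝ ℝ)) p)‖ ≤ 1 := by
    rw [norm_iteratedFDeriv_eq_norm_iteratedDeriv]
    simpa using hb j p.2
  have h2 : (∏ _i : Fin j, ‖(ContinuousLinearMap.snd ℝ ℝ ℝ : ℝ × ℝ →L[ℝ] ℝ)‖) ≤ 1 := by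
    refine Finset.prod_le_one (fun _ _ => norm_nonneg _) (fun _ _ => ?_)
    refine ContinuousLinearMap.opNorm_le_bound _ zero_le_one (fun q => ?_)
    simpa using (norm_snd_le q).trans (by linarith [norm_nonneg q])
  calc ‖iteratedFDeriv ℝ j h ((ContinuousLinearMap.snd ℝ ℝ ℝ) p)‖ *
        ∏ _i : Fin j, ‖(ContinuousLinearMap.snd ℝ ℝ ℝ : ℝ × ℝ →L[ℝ] ℝ)‖
      ≤ 1 * 1 := by
        exact mul_le_mul h1 h2 (Finset.prod_nonneg fun _ _ => norm_nonneg _) zero_le_one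
    _ = 1 := by ring

theorem iFD_clm_comp_le {h : ℝ × ℝ → ℝ} (hh : ContDiff ℝ ∞ h) (L : ℝ →L[ℝ] ℝ × ℝ)
    (hL : ‖L‖ ≤ 1) (j : ℕ) (p : ℝ × ℝ) (C : ℝ)
    (hb : ‖iteratedFDeriv ℝ j h p‖ ≤ C) :
    ‖iteratedFDeriv ℝ j (fun q => L (h q)) p‖ ≤ C := by
  have hcomp : (fun q => L (h q)) = (L : ℝ → ℝ × ℝ) ∘ h := rfl
  rw [hcomp, L.iteratedFDeriv_comp_left (hh.contDiffAt (x := p)) (i := j) (by exact_mod_cast le_top)]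
  refine le_trans (ContinuousLinearMap.norm_compContinuousMultilinearMap_le _ _) ?_
  calc ‖L‖ * ‖iteratedFDeriv ℝ j h p‖ ≤ 1 * C :=
        mul_le_mul hL hb (norm_nonneg _) zero_le_one
    _ = C := one_mul C

theorem iFD_curve_le (j : ℕ) (p : ℝ × ℝ) :
    ‖iteratedFDeriv ℝ j (fun q : ℝ × ℝ => ((Real.cos q.2, Real.sin q.2) : ℝ × ℝ)) p‖ ≤ 2 := by
  have hsplit : (fun q : ℝ × ℝ => ((Real.cos q.2, Real.sin q.2) : ℝ × ℝ)) =
      fun q : ℝ × ℝ => ((ContinuousLinearMap.inl ℝ ℝ ℝ) (Real.cos q.2) +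
        (ContinuousLinearMap.inr ℝ ℝ ℝ) (Real.sin q.2)) := by
    funext q
    simp [Prod.ext_iff]
  have hc : ContDiff ℝ (j : WithTop ℕ∞) (fun q : ℝ × ℝ =>
      (ContinuousLinearMap.inl ℝ ℝ ℝ) (Real.cos q.2)) :=
    ((ContinuousLinearMap.inl ℝ ℝ ℝ).contDiff.comp
      (Real.contDiff_cos.comp contDiff_snd)).of_le le_top
  have hs : ContDiff ℝ (j : WithTop ℕ∞) (fun q : ℝ × ℝ =>
      (ContinuousLinearMap.inr ℝ ℝ ℝ) (Real.sin q.2)) :=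
    ((ContinuousLinearMap.inr ℝ ℝ ℝ).contDiff.comp
      (Real.contDiff_sin.comp contDiff_snd)).of_le le_top
  rw [hsplit]
  have hadd := iteratedFDeriv_add_apply (i := j) hc.contDiffAt hs.contDiffAt (x := p)
  rw [show (fun q : ℝ × ℝ => ((ContinuousLinearMap.inl ℝ ℝ ℝ) (Real.cos q.2) +
        (ContinuousLinearMap.inr ℝ ℝ ℝ) (Real.sin q.2))) =
      (fun q : ℝ × ℝ => (ContinuousLinearMap.inl ℝ ℝ ℝ) (Real.cos q.2)) +
      (fun q : ℝ × ℝ => (ContinuousLinearMap.inr ℝ ℝ ℝ) (Real.sin q.2)) from rfl]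
  have hn1 : ‖iteratedFDeriv ℝ j (fun q : ℝ × ℝ =>
      (ContinuousLinearMap.inl ℝ ℝ ℝ) (Real.cos q.2)) p‖ ≤ 1 := by
    refine iFD_clm_comp_le (Real.contDiff_cos.comp contDiff_snd) _ ?_ j p 1 ?_
    · refine ContinuousLinearMap.opNorm_le_bound _ zero_le_one (fun x => ?_)
      simp [Prod.norm_def]
    · exact iFD_comp_snd_le (Real.contDiff_cos.of_le le_top)
        (fun j θ => (trig_bound j θ).1) j p
  have hn2 : ‖iteratedFDeriv ℝ j (fun q : ℝ × ℝ =>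
      (ContinuousLinearMap.inr ℝ ℝ ℝ) (Real.sin q.2)) p‖ ≤ 1 := by
    refine iFD_clm_comp_le (Real.contDiff_sin.comp contDiff_snd) _ ?_ j p 1 ?_
    · refine ContinuousLinearMap.opNorm_le_bound _ zero_le_one (fun x => ?_)
      simp [Prod.norm_def]
    · exact iFD_comp_snd_le (Real.contDiff_sin.of_le le_top)
        (fun j θ => (trig_bound j θ).2) j p
  calc ‖iteratedFDeriv ℝ j ((fun q : ℝ × ℝ => (ContinuousLinearMap.inl ℝ ℝ ℝ) (Real.cos q.2)) +
      (fun q : ℝ × ℝ => (ContinuousLinearMap.inr ℝ ℝ ℝ) (Real.sin q.2))) p‖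
      = ‖iteratedFDeriv ℝ j (fun q : ℝ × ℝ => (ContinuousLinearMap.inl ℝ ℝ ℝ) (Real.cos q.2)) p
        + iteratedFDeriv ℝ j (fun q : ℝ × ℝ =>
          (ContinuousLinearMap.inr ℝ ℝ ℝ) (Real.sin q.2)) p‖ := by rw [hadd]
    _ ≤ 1 + 1 := le_trans (norm_add_le _ _) (add_le_add hn1 hn2)
    _ = 2 := by norm_num

theorem iFD_fst_le' (j : ℕ) (p : ℝ × ℝ) :
    ‖iteratedFDeriv ℝ j (fun q : ℝ × ℝ => q.1) p‖ ≤ 1 + |p.1| := by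
  rcases Nat.eq_zero_or_pos j with hj | hj
  · subst hj
    rw [norm_iteratedFDeriv_zero]
    simp [Real.norm_eq_abs]
  · obtain ⟨i, rfl⟩ := Nat.exists_eq_add_of_le hj
    have hfst : (fun q : ℝ × ℝ => q.1) = (ContinuousLinearMap.fst ℝ ℝ ℝ : ℝ × ℝ →L[ℝ] ℝ) := rfl
    have h1 : (fderiv ℝ (fun q : ℝ × ℝ => q.1)) = fun _ => (ContinuousLinearMap.fst ℝ ℝ ℝ) := by
      funext q
      rw [hfst, ContinuousLinearMap.fderiv]
    rw [add_comm 1 i, ← norm_iteratedFDeriv_fderiv, h1]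
    have habs : (0:ℝ) ≤ |p.1| := abs_nonneg _
    rcases Nat.eq_zero_or_pos i with hi | hi
    · subst hi
      rw [norm_iteratedFDeriv_zero]
      refine le_trans (ContinuousLinearMap.opNorm_le_bound _ zero_le_one (fun q => ?_)) (by linarith)
      simpa using (norm_fst_le q).trans (by linarith [norm_nonneg q])
    · rw [iteratedFDeriv_const_of_ne (by omega)]
      simp
      linarith

theorem iFD_P_le (i : ℕ) (p : ℝ × ℝ) :
    ‖iteratedFDeriv ℝ i (fun q : ℝ × ℝ =>
      ((q.1 * Real.cos q.2, q.1 * Real.sin q.2) : ℝ × ℝ)) p‖ ≤ 2 ^ (i + 1) * (1 + |p.1|) := by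
  have hsmul : (fun q : ℝ × ℝ => ((q.1 * Real.cos q.2, q.1 * Real.sin q.2) : ℝ × ℝ)) =
      fun q : ℝ × ℝ => q.1 • ((Real.cos q.2, Real.sin q.2) : ℝ × ℝ) := rfl
  have hf : ContDiff ℝ ∞ (fun q : ℝ × ℝ => q.1) := contDiff_fst
  have hg : ContDiff ℝ ∞ (fun q : ℝ × ℝ => ((Real.cos q.2, Real.sin q.2) : ℝ × ℝ)) :=
    (Real.contDiff_cos.comp contDiff_snd).prodMk (Real.contDiff_sin.comp contDiff_snd)
  rw [hsmul]
  refine le_trans (norm_iteratedFDeriv_smul_le hf hg p (n := i) (by exact_mod_cast le_top)) ?_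
  have hterm : ∀ j ∈ Finset.range (i + 1),
      (i.choose j : ℝ) * ‖iteratedFDeriv ℝ j (fun q : ℝ × ℝ => q.1) p‖ *
        ‖iteratedFDeriv ℝ (i - j) (fun q : ℝ × ℝ =>
          ((Real.cos q.2, Real.sin q.2) : ℝ × ℝ)) p‖ ≤
      (i.choose j : ℝ) * ((1 + |p.1|) * 2) := by
    intro j _
    rw [mul_assoc]
    refine mul_le_mul_of_nonneg_left ?_ (by positivity)
    exact mul_le_mul (iFD_fst_le' j p) (iFD_curve_le (i - j) p) (norm_nonneg _)
      (by positivity)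
  refine le_trans (Finset.sum_le_sum hterm) ?_
  rw [← Finset.sum_mul]
  have hchoose : (∑ j ∈ Finset.range (i + 1), (i.choose j : ℝ)) = 2 ^ i := by
    exact_mod_cast congrArg (Nat.cast : ℕ → ℝ) (Nat.sum_range_choose i)
  rw [hchoose]
  have : (0:ℝ) ≤ 1 + |p.1| := by positivity
  calc (2:ℝ) ^ i * ((1 + |p.1|) * 2) = 2 ^ (i + 1) * (1 + |p.1|) := by ring
    _ ≤ 2 ^ (i + 1) * (1 + |p.1|) := le_refl _



theorem key_pointwise (f : SchwartzMap (ℝ × ℝ) ℂ) (k l : ℕ) (σ : ℝ) (hσ : 0 < σ)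
    (t θ : ℝ) (ht : 0 < t) :
    t ^ (σ + (k : ℝ)) * ‖iteratedFDeriv ℝ (k + l)
        (fun p : ℝ × ℝ => f (p.1 * Real.cos p.2, p.1 * Real.sin p.2)) (t, θ)‖ ≤
      ((k + l).factorial * 4 ^ (⌈σ⌉₊ + 2 * k + l) * 2 ^ ((k + l + 1) * (k + l))) *
        ((Finset.Iic (⌈σ⌉₊ + 2 * k + l, k + l)).sup
          (fun mm => SchwartzMap.seminorm ℝ mm.1 mm.2) f) := by
  set m : ℕ := ⌈σ⌉₊ + 2 * k + l with hm
  set S : ℝ := (Finset.Iic (m, k + l)).sup (fun mm => SchwartzMap.seminorm ℝ mm.1 mm.2) f with hS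
  have hS0 : 0 ≤ S := apply_nonneg _ f
  set P : ℝ × ℝ → ℝ × ℝ := fun q => (q.1 * Real.cos q.2, q.1 * Real.sin q.2) with hP
  have hPc : ContDiff ℝ ∞ P :=
    (contDiff_fst.mul (Real.contDiff_cos.comp contDiff_snd)).prodMk
      (contDiff_fst.mul (Real.contDiff_sin.comp contDiff_snd))
  have hcomp : (fun p : ℝ × ℝ => f (p.1 * Real.cos p.2, p.1 * Real.sin p.2)) = ⇑f ∘ P := rfl
  have hxnorm : t ≤ 2 * ‖P (t, θ)‖ := by
    have habs : 1 ≤ |Real.cos θ| + |Real.sin θ| := by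
      nlinarith [Real.sin_sq_add_cos_sq θ, Real.abs_cos_le_one θ, Real.abs_sin_le_one θ,
        abs_nonneg (Real.cos θ), abs_nonneg (Real.sin θ), sq_abs (Real.cos θ),
        sq_abs (Real.sin θ)]
    have hcs : t ≤ |t * Real.cos θ| + |t * Real.sin θ| := by
      rw [abs_mul, abs_mul, abs_of_pos ht]
      nlinarith [mul_le_mul_of_nonneg_left habs ht.le]
    have h1 : |t * Real.cos θ| ≤ ‖P (t, θ)‖ := by
      rw [hP, Prod.norm_def]
      exact le_max_of_le_left (le_of_eq (Real.norm_eq_abs _).symm)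
    have h2 : |t * Real.sin θ| ≤ ‖P (t, θ)‖ := by
      rw [hP, Prod.norm_def]
      exact le_max_of_le_right (le_of_eq (Real.norm_eq_abs _).symm)
    linarith
  have hx1 : 1 + t ≤ 2 * (1 + ‖P (t, θ)‖) := by linarith [norm_nonneg (P (t, θ))]
  have hC : ∀ i, i ≤ k + l → ‖iteratedFDeriv ℝ i (⇑f) (P (t, θ))‖ ≤
      4 ^ m * S / (1 + t) ^ m := by
    intro i hi
    rw [le_div_iff₀ (by positivity : (0:ℝ) < (1 + t) ^ m)]
    have hpow : (1 + t) ^ m ≤ 2 ^ m * (1 + ‖P (t, θ)‖) ^ m := by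
      rw [← mul_pow]
      exact pow_le_pow_left₀ (by linarith) hx1 m
    calc ‖iteratedFDeriv ℝ i (⇑f) (P (t, θ))‖ * (1 + t) ^ m
        ≤ ‖iteratedFDeriv ℝ i (⇑f) (P (t, θ))‖ * (2 ^ m * (1 + ‖P (t, θ)‖) ^ m) :=
          mul_le_mul_of_nonneg_left hpow (norm_nonneg _)
      _ = 2 ^ m * ((1 + ‖P (t, θ)‖) ^ m * ‖iteratedFDeriv ℝ i (⇑f) (P (t, θ))‖) := by ring
      _ ≤ 2 ^ m * (2 ^ m * S) := by
          refine mul_le_mul_of_nonneg_left ?_ (by positivity)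
          exact SchwartzMap.one_add_le_sup_seminorm_apply (𝕜 := ℝ) (m := (m, k + l))
            (le_refl m) hi f (P (t, θ))
      _ = 4 ^ m * S := by rw [← mul_assoc, ← mul_pow]; norm_num
  have hD : ∀ i, 1 ≤ i → i ≤ k + l → ‖iteratedFDeriv ℝ i P (t, θ)‖ ≤
      (2 ^ (k + l + 1) * (1 + t)) ^ i := by
    intro i h1i hikl
    have hb := iFD_P_le i (t, θ)
    have habs : |(t, θ).1| = t := abs_of_pos ht
    rw [habs] at hb
    have hD1 : (1:ℝ) ≤ 2 ^ (k + l + 1) * (1 + t) := by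
      have h2 : (1:ℝ) ≤ 2 ^ (k + l + 1) := one_le_pow₀ (by norm_num)
      nlinarith
    calc ‖iteratedFDeriv ℝ i P (t, θ)‖ ≤ 2 ^ (i + 1) * (1 + t) := hb
      _ ≤ 2 ^ (k + l + 1) * (1 + t) := by
          have : (2:ℝ) ^ (i + 1) ≤ 2 ^ (k + l + 1) := by
            apply pow_le_pow_right₀ (by norm_num)
            omega
          nlinarith
      _ ≤ (2 ^ (k + l + 1) * (1 + t)) ^ i := le_self_pow₀ hD1 (by omega)
  have hmain := norm_iteratedFDeriv_comp_le (𝕜 := ℝ) (f.smooth ⊤) hPc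
    (by exact_mod_cast le_top) (t, θ) hC hD
  rw [hcomp]
  have hrpow : t ^ (σ + (k : ℝ)) * (1 + t) ^ (k + l) ≤ (1 + t) ^ m := by
    have h1 : t ^ (σ + (k : ℝ)) ≤ (1 + t) ^ (σ + (k : ℝ)) :=
      Real.rpow_le_rpow ht.le (by linarith) (by positivity)
    have h2 : (1 + t) ^ (σ + (k : ℝ)) ≤ (1 + t) ^ ((⌈σ⌉₊ + k : ℕ) : ℝ) := by
      apply Real.rpow_le_rpow_of_exponent_le (by linarith)
      push_cast
      have := Nat.le_ceil σ
      linarith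
    have h3 : (1 + t) ^ ((⌈σ⌉₊ + k : ℕ) : ℝ) = (1 + t) ^ (⌈σ⌉₊ + k) :=
      Real.rpow_natCast _ _
    have h4 : t ^ (σ + (k : ℝ)) ≤ (1 + t) ^ (⌈σ⌉₊ + k) := by
      rw [← h3]; exact h1.trans h2
    calc t ^ (σ + (k : ℝ)) * (1 + t) ^ (k + l)
        ≤ (1 + t) ^ (⌈σ⌉₊ + k) * (1 + t) ^ (k + l) :=
          mul_le_mul_of_nonneg_right h4 (by positivity)
      _ = (1 + t) ^ m := by rw [← pow_add]; congr 1; omega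
  have htp : (0:ℝ) ≤ t ^ (σ + (k : ℝ)) := Real.rpow_nonneg ht.le _
  calc t ^ (σ + (k : ℝ)) * ‖iteratedFDeriv ℝ (k + l) (⇑f ∘ P) (t, θ)‖
      ≤ t ^ (σ + (k : ℝ)) * ((k + l).factorial * (4 ^ m * S / (1 + t) ^ m) *
          (2 ^ (k + l + 1) * (1 + t)) ^ (k + l)) := mul_le_mul_of_nonneg_left hmain htp
    _ = ((k + l).factorial * 4 ^ m * 2 ^ ((k + l + 1) * (k + l))) * S *
          (t ^ (σ + (k : ℝ)) * (1 + t) ^ (k + l) / (1 + t) ^ m) := by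
        rw [mul_pow, ← pow_mul]
        field_simp
    _ ≤ ((k + l).factorial * 4 ^ m * 2 ^ ((k + l + 1) * (k + l))) * S * 1 := by
        refine mul_le_mul_of_nonneg_left ?_ (by positivity)
        rw [div_le_one (by positivity)]
        exact hrpow
    _ = ((k + l).factorial * 4 ^ m * 2 ^ ((k + l + 1) * (k + l))) * S := mul_one _


/-- The exponential `e^{inθ}`. -/
def ee (n : ℤ) : ℝ → ℂ := fun θ => Complex.exp (Complex.I * n * θ)

theorem ee_continuous (n : ℤ) : Continuous (ee n) :=
  Complex.continuous_exp.comp (continuous_const.mul Complex.continuous_ofReal)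

theorem ee_hasDerivAt (n : ℤ) (θ : ℝ) :
    HasDerivAt (ee n) (Complex.I * n * ee n θ) θ := by
  have h0 : HasDerivAt (fun θ : ℝ => (θ : ℂ)) 1 θ := by
    exact Complex.ofRealCLM.hasDerivAt (x := θ)
  have h1 : HasDerivAt (fun θ : ℝ => Complex.I * n * (θ : ℂ)) (Complex.I * n) θ := by
    simpa using h0.const_mul (Complex.I * n)
  have h2 := h1.cexp
  have h3 : (fun θ : ℝ => Complex.exp (Complex.I * n * (θ : ℂ))) = ee n := rfl
  rw [show Complex.I * (n : ℂ) * ee n θ = Complex.exp (Complex.I * n * (θ:ℂ)) * (Complex.I * n) from by rw [ee]; ring, ← h3]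
  exact h2

theorem ee_norm (n : ℤ) (θ : ℝ) : ‖ee n θ‖ = 1 := by
  have h : Complex.I * n * θ = ((n * θ : ℝ) : ℂ) * Complex.I := by push_cast; ring
  rw [ee, h, Complex.norm_exp_ofReal_mul_I]

theorem ee_two_pi (n : ℤ) : ee n (2 * Real.pi) = 1 := by
  have h : Complex.I * n * ((2 * Real.pi : ℝ) : ℂ) = n * (2 * Real.pi * Complex.I) := by
    push_cast; ring
  rw [ee, h, Complex.exp_int_mul_two_pi_mul_I]

theorem ee_zero (n : ℤ) : ee n 0 = 1 := by simp [ee]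

/-- The function in polar-like coordinates. -/
def gfun (f : SchwartzMap (ℝ × ℝ) ℂ) : ℝ × ℝ → ℂ :=
  fun p => f (p.1 * Real.cos p.2, p.1 * Real.sin p.2)

theorem gfun_contDiff (f : SchwartzMap (ℝ × ℝ) ℂ) : ContDiff ℝ ∞ (gfun f) := by
  have hP : ContDiff ℝ ∞ (fun p : ℝ × ℝ => (p.1 * Real.cos p.2, p.1 * Real.sin p.2)) :=
    (contDiff_fst.mul (Real.contDiff_cos.comp contDiff_snd)).prodMk
      (contDiff_fst.mul (Real.contDiff_sin.comp contDiff_snd))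
  exact (f.smooth ⊤).comp hP

theorem gfun_periodic (f : SchwartzMap (ℝ × ℝ) ℂ) (p : ℝ × ℝ) :
    gfun f (p + (0, 2 * Real.pi)) = gfun f p := by
  show f ((p.1 + 0) * Real.cos (p.2 + 2 * Real.pi), (p.1 + 0) * Real.sin (p.2 + 2 * Real.pi)) =
    f (p.1 * Real.cos p.2, p.1 * Real.sin p.2)
  rw [add_zero, Real.cos_add_two_pi, Real.sin_add_two_pi]

/-- Iterated mixed partial derivatives: first `j` derivatives in `t`, then `m` in `θ`. -/
def GG (f : SchwartzMap (ℝ × ℝ) ℂ) (j m : ℕ) : ℝ × ℝ → ℂ :=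
  (pd (0, 1))^[m] ((pd (1, 0))^[j] (gfun f))

theorem GG_contDiff (f : SchwartzMap (ℝ × ℝ) ℂ) (j m : ℕ) : ContDiff ℝ ∞ (GG f j m) :=
  pd_iterate_contDiff _ m (pd_iterate_contDiff _ j (gfun_contDiff f))

theorem GG_succ_t (f : SchwartzMap (ℝ × ℝ) ℂ) (j : ℕ) :
    GG f (j + 1) 0 = pd (1, 0) (GG f j 0) := by
  show (pd (0,1))^[0] ((pd (1,0))^[j+1] (gfun f)) = pd (1,0) ((pd (0,1))^[0] ((pd (1,0))^[j] (gfun f)))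
  rw [Function.iterate_zero_apply, Function.iterate_zero_apply, Function.iterate_succ_apply']

theorem GG_succ_th (f : SchwartzMap (ℝ × ℝ) ℂ) (j m : ℕ) :
    GG f j (m + 1) = pd (0, 1) (GG f j m) :=
  Function.iterate_succ_apply' _ _ _

theorem GG_periodic (f : SchwartzMap (ℝ × ℝ) ℂ) (j m : ℕ) (p : ℝ × ℝ) :
    GG f j m (p + (0, 2 * Real.pi)) = GG f j m p := by
  induction m generalizing p with
  | zero =>
    induction j generalizing p with
    | zero => exact gfun_periodic f p
    | succ j ihj =>
      rw [GG_succ_t]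
      exact pd_periodic (GG_contDiff f j 0) (fun q => ihj q) _ p
  | succ m ihm =>
    rw [GG_succ_th]
    exact pd_periodic (GG_contDiff f j m) (fun q => ihm q) _ p

theorem GG_norm_le (f : SchwartzMap (ℝ × ℝ) ℂ) (j m : ℕ) (p : ℝ × ℝ) :
    ‖GG f j m p‖ ≤ ‖iteratedFDeriv ℝ (j + m) (gfun f) p‖ := by
  have h0 : ‖GG f j m p‖ = ‖iteratedFDeriv ℝ 0 (GG f j m) p‖ :=
    (norm_iteratedFDeriv_zero).symm
  rw [h0]
  have hv2 : ‖((0 : ℝ), (1 : ℝ))‖ ≤ 1 := by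
    rw [Prod.norm_def]; simp
  have hv1 : ‖((1 : ℝ), (0 : ℝ))‖ ≤ 1 := by
    rw [Prod.norm_def]; simp
  refine le_trans (norm_iFD_pd_iterate_le _ hv2 m
    (pd_iterate_contDiff _ j (gfun_contDiff f)) 0 p) ?_
  refine le_trans (norm_iFD_pd_iterate_le _ hv1 j (gfun_contDiff f) (0 + m) p) ?_
  rw [show 0 + m + j = j + m by omega]


/-- The Fourier-type integrals of the `t`-derivatives. -/
def phi (f : SchwartzMap (ℝ × ℝ) ℂ) (n : ℤ) (j : ℕ) : ℝ → ℂ :=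
  fun s => ∫ θ in (0:ℝ)..(2 * Real.pi), GG f j 0 (s, θ) * ee n θ

theorem integrand_continuous (f : SchwartzMap (ℝ × ℝ) ℂ) (n : ℤ) (j m : ℕ) (s : ℝ) :
    Continuous fun θ => GG f j m (s, θ) * ee n θ :=
  ((GG_contDiff f j m).continuous.comp (Continuous.prodMk_right s)).mul (ee_continuous n)

theorem phi_hasDerivAt (f : SchwartzMap (ℝ × ℝ) ℂ) (n : ℤ) (j : ℕ) (s : ℝ) :
    HasDerivAt (phi f n j) (phi f n (j + 1) s) s := by
  obtain ⟨M, hM⟩ := ((isCompact_closedBall s 1).prod (isCompact_uIcc (a := (0:ℝ))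
      (b := 2 * Real.pi))).exists_bound_of_continuousOn
    ((GG_contDiff f (j + 1) 0).continuous.continuousOn)
  refine (intervalIntegral.hasDerivAt_integral_of_dominated_loc_of_deriv_le
    (F := fun x θ => GG f j 0 (x, θ) * ee n θ)
    (F' := fun x θ => GG f (j + 1) 0 (x, θ) * ee n θ)
    (bound := fun _ => M) (Metric.ball_mem_nhds s one_pos) ?_ ?_ ?_ ?_ ?_ ?_).2
  · exact Filter.Eventually.of_forall fun x =>
      (integrand_continuous f n j 0 x).aestronglyMeasurable
  · exact (integrand_continuous f n j 0 s).intervalIntegrable _ _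
  · exact (integrand_continuous f n (j + 1) 0 s).aestronglyMeasurable
  · refine Filter.Eventually.of_forall fun θ hθ x hx => ?_
    rw [norm_mul, ee_norm, mul_one]
    refine hM (x, θ) (Set.mem_prod.2 ⟨Metric.ball_subset_closedBall hx, ?_⟩)
    exact Set.Ioc_subset_Icc_self hθ
  · exact intervalIntegrable_const
  · refine Filter.Eventually.of_forall fun θ hθ x hx => ?_
    rw [GG_succ_t]
    exact (hasDerivAt_line1 (GG_contDiff f j 0) x θ).mul_const (ee n θ)

theorem phi_iteratedDeriv (f : SchwartzMap (ℝ × ℝ) ℂ) (n : ℤ) (j : ℕ) :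
    iteratedDeriv j (phi f n 0) = phi f n j := by
  induction j with
  | zero => rw [iteratedDeriv_zero]
  | succ j ih =>
    rw [iteratedDeriv_succ, ih]
    funext s
    exact (phi_hasDerivAt f n j s).deriv

theorem phi_contDiff (f : SchwartzMap (ℝ × ℝ) ℂ) (n : ℤ) (N : ℕ) :
    ∀ j, ContDiff ℝ N (phi f n j) := by
  induction N with
  | zero =>
    intro j
    rw [show ((0:ℕ) : WithTop ℕ∞) = 0 from rfl, contDiff_zero]
    have hdiff : Differentiable ℝ (phi f n j) := fun s => (phi_hasDerivAt f n j s).differentiableAt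
    exact hdiff.continuous
  | succ N ih =>
    intro j
    rw [show ((N + 1 : ℕ) : WithTop ℕ∞) = (N : WithTop ℕ∞) + 1 from by push_cast; rfl,
      contDiff_succ_iff_deriv]
    refine ⟨fun s => (phi_hasDerivAt f n j s).differentiableAt, ?_, ?_⟩
    · intro h
      exact absurd h (by simp)
    · have hd : deriv (phi f n j) = phi f n (j + 1) :=
        funext fun s => (phi_hasDerivAt f n j s).deriv
      rw [hd]
      exact ih (j + 1)

theorem ibp_step (f : SchwartzMap (ℝ × ℝ) ℂ) (n : ℤ) (k m : ℕ) (t : ℝ) :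
    (∫ θ in (0:ℝ)..(2 * Real.pi), GG f k (m + 1) (t, θ) * ee n θ) =
      (-(Complex.I * n)) * ∫ θ in (0:ℝ)..(2 * Real.pi), GG f k m (t, θ) * ee n θ := by
  have hu : ∀ θ : ℝ, HasDerivAt (fun θ => GG f k m (t, θ)) (GG f k (m + 1) (t, θ)) θ := by
    intro θ
    rw [GG_succ_th]
    exact hasDerivAt_line2 (GG_contDiff f k m) t θ
  have huv : ∀ θ ∈ Set.uIcc (0:ℝ) (2 * Real.pi),
      HasDerivAt (fun θ => GG f k m (t, θ) * ee n θ)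
        (GG f k (m + 1) (t, θ) * ee n θ + GG f k m (t, θ) * (Complex.I * n * ee n θ)) θ :=
    fun θ _ => (hu θ).mul (ee_hasDerivAt n θ)
  have hcont1 := integrand_continuous f n k (m + 1) t
  have hcont2 : Continuous fun θ => GG f k m (t, θ) * (Complex.I * n * ee n θ) :=
    ((GG_contDiff f k m).continuous.comp (Continuous.prodMk_right t)).mul
      (continuous_const.mul (ee_continuous n))
  have hint : IntervalIntegrable (fun θ => GG f k (m + 1) (t, θ) * ee n θ +
      GG f k m (t, θ) * (Complex.I * n * ee n θ)) volume 0 (2 * Real.pi) :=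
    (hcont1.add hcont2).intervalIntegrable _ _
  have heq := intervalIntegral.integral_eq_sub_of_hasDerivAt huv hint
  have hzero : GG f k m (t, 2 * Real.pi) * ee n (2 * Real.pi) -
      GG f k m (t, 0) * ee n 0 = 0 := by
    have hp : GG f k m (t, 2 * Real.pi) = GG f k m (t, 0) := by
      have := GG_periodic f k m (t, 0)
      simpa using this
    rw [hp, ee_two_pi, ee_zero]
    ring
  rw [hzero] at heq
  rw [intervalIntegral.integral_add (hcont1.intervalIntegrable _ _)
    (hcont2.intervalIntegrable _ _)] at heq
  have hpull : (fun θ => GG f k m (t, θ) * (Complex.I * n * ee n θ)) =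
      fun θ => (Complex.I * n) * (GG f k m (t, θ) * ee n θ) := by
    funext θ; ring
  rw [hpull, intervalIntegral.integral_const_mul] at heq
  linear_combination heq

theorem ibp_iter (f : SchwartzMap (ℝ × ℝ) ℂ) (n : ℤ) (k : ℕ) (t : ℝ) (l : ℕ) :
    (∫ θ in (0:ℝ)..(2 * Real.pi), GG f k l (t, θ) * ee n θ) =
      (-(Complex.I * n)) ^ l * ∫ θ in (0:ℝ)..(2 * Real.pi), GG f k 0 (t, θ) * ee n θ := by
  induction l with
  | zero => rw [pow_zero, one_mul]
  | succ l ih =>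
    rw [ibp_step, ih]
    ring


end Stmt13
end Stmt13Aux

open Stmt13 in
/-- For a Schwartz function `f` on `ℝ²`, the Fourier coefficients
`f_n(t) = (1/2π) ∫_0^{2π} f(t cos θ, t sin θ) e^{inθ} dθ` satisfy: for every `k, l ∈ ℕ` and
`σ > 0` there are `C > 0` and a finite family of Schwartz seminorms with maximum `S*`, both
independent of `n`, such that `t^{σ+k} |f_n^{(k)}(t)| ≤ C |n|^{-l} S*(f)` for all `n ≠ 0` and
`t > 0`. -/
theorem stmt_13 (f : SchwartzMap (ℝ × ℝ) ℂ) (k l : ℕ) (σ : ℝ) (hσ : 0 < σ) :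
    ∃ (C : ℝ) (F : Finset (ℕ × ℕ)), 0 < C ∧
      ∀ n : ℤ, n ≠ 0 → ∀ t : ℝ, 0 < t →
        t ^ (σ + (k:ℝ)) *
          ‖iteratedDeriv k
            (fun t' : ℝ => (1 / (2 * Real.pi)) •
              ∫ θ in (0:ℝ)..(2 * Real.pi),
                f (t' * Real.cos θ, t' * Real.sin θ) * Complex.exp (Complex.I * n * θ)) t‖
          ≤ C * |(n:ℝ)| ^ (-(l:ℝ))
              * ((F.sup fun kn => SchwartzMap.seminorm ℝ kn.1 kn.2) f) := by
  refine ⟨((k + l).factorial * 4 ^ (⌈σ⌉₊ + 2 * k + l) * 2 ^ ((k + l + 1) * (k + l)) + 1 : ℝ),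
    Finset.Iic (⌈σ⌉₊ + 2 * k + l, k + l), by positivity, ?_⟩
  intro n hn t ht
  set C₀ : ℝ := ((k + l).factorial * 4 ^ (⌈σ⌉₊ + 2 * k + l) * 2 ^ ((k + l + 1) * (k + l)) : ℝ)
    with hC₀
  set S : ℝ := ((Finset.Iic (⌈σ⌉₊ + 2 * k + l, k + l)).sup
    (fun kn => SchwartzMap.seminorm ℝ kn.1 kn.2)) f with hS
  have hS0 : 0 ≤ S := apply_nonneg _ f
  have h0 : (fun t' : ℝ => (1 / (2 * Real.pi)) •
      ∫ θ in (0:ℝ)..(2 * Real.pi),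
        f (t' * Real.cos θ, t' * Real.sin θ) * Complex.exp (Complex.I * n * θ)) =
      fun t' => (1 / (2 * Real.pi)) • phi f n 0 t' := rfl
  rw [h0]
  have hsmul : ‖iteratedDeriv k (fun t' => (1 / (2 * Real.pi)) • phi f n 0 t') t‖ =
      (1 / (2 * Real.pi)) * ‖iteratedDeriv k (phi f n 0) t‖ := by
    rw [← norm_iteratedFDeriv_eq_norm_iteratedDeriv, ← norm_iteratedFDeriv_eq_norm_iteratedDeriv,
      iteratedFDeriv_const_smul_apply' (phi_contDiff f n k 0).contDiffAt,
      norm_smul (1 / (2 * Real.pi)) (iteratedFDeriv ℝ k (phi f n 0) t)]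
    congr 1
    rw [Real.norm_eq_abs, abs_of_pos (by positivity)]
  rw [hsmul, phi_iteratedDeriv f n k]
  have hIl := ibp_iter f n k t l
  have hneg : ‖(-(Complex.I * (n:ℂ)))‖ = |(n:ℝ)| := by
    rw [norm_neg, norm_mul, Complex.norm_I, one_mul]
    exact_mod_cast Complex.norm_intCast n
  have hIlnorm : ‖∫ θ in (0:ℝ)..(2 * Real.pi), GG f k l (t, θ) * ee n θ‖ =
      |(n:ℝ)| ^ l * ‖phi f n k t‖ := by
    rw [hIl, norm_mul, norm_pow, hneg]
    rfl
  have hn0 : (0:ℝ) < |(n:ℝ)| := abs_pos.2 (by exact_mod_cast hn)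
  have htp : (0:ℝ) < t ^ (σ + (k:ℝ)) := Real.rpow_pos_of_pos ht _
  have hI0 : ‖phi f n k t‖ = |(n:ℝ)| ^ (-(l:ℝ)) *
      ‖∫ θ in (0:ℝ)..(2 * Real.pi), GG f k l (t, θ) * ee n θ‖ := by
    rw [hIlnorm, Real.rpow_neg (abs_nonneg _), Real.rpow_natCast]
    field_simp
  have hbound : ∀ θ ∈ Set.uIoc (0:ℝ) (2 * Real.pi),
      ‖GG f k l (t, θ) * ee n θ‖ ≤ C₀ * S / t ^ (σ + (k:ℝ)) := by
    intro θ _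
    rw [norm_mul, ee_norm, mul_one, le_div_iff₀ htp]
    have hkp := key_pointwise f k l σ hσ t θ ht
    have hg_eq : (fun p : ℝ × ℝ => f (p.1 * Real.cos p.2, p.1 * Real.sin p.2)) = gfun f := rfl
    rw [hg_eq] at hkp
    calc ‖GG f k l (t, θ)‖ * t ^ (σ + (k:ℝ))
        = t ^ (σ + (k:ℝ)) * ‖GG f k l (t, θ)‖ := mul_comm _ _
      _ ≤ t ^ (σ + (k:ℝ)) * ‖iteratedFDeriv ℝ (k + l) (gfun f) (t, θ)‖ :=
          mul_le_mul_of_nonneg_left (GG_norm_le f k l (t, θ)) htp.le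
      _ ≤ C₀ * S := hkp
  have hInt : ‖∫ θ in (0:ℝ)..(2 * Real.pi), GG f k l (t, θ) * ee n θ‖ ≤
      (C₀ * S / t ^ (σ + (k:ℝ))) * |2 * Real.pi - 0| :=
    intervalIntegral.norm_integral_le_of_norm_le_const hbound
  rw [sub_zero, abs_of_pos Real.two_pi_pos] at hInt
  have hrpw : (0:ℝ) ≤ |(n:ℝ)| ^ (-(l:ℝ)) := Real.rpow_nonneg (abs_nonneg _) _
  calc t ^ (σ + (k:ℝ)) * (1 / (2 * Real.pi) * ‖phi f n k t‖)
      = |(n:ℝ)| ^ (-(l:ℝ)) * (t ^ (σ + (k:ℝ)) * (1 / (2 * Real.pi)) *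
          ‖∫ θ in (0:ℝ)..(2 * Real.pi), GG f k l (t, θ) * ee n θ‖) := by
        rw [hI0]; ring
    _ ≤ |(n:ℝ)| ^ (-(l:ℝ)) * (t ^ (σ + (k:ℝ)) * (1 / (2 * Real.pi)) *
          ((C₀ * S / t ^ (σ + (k:ℝ))) * (2 * Real.pi))) := by
        refine mul_le_mul_of_nonneg_left (mul_le_mul_of_nonneg_left hInt ?_) hrpw
        positivity
    _ = C₀ * |(n:ℝ)| ^ (-(l:ℝ)) * S := by
        field_simp
    _ ≤ (C₀ + 1) * |(n:ℝ)| ^ (-(l:ℝ)) * S := by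
        refine mul_le_mul_of_nonneg_right (mul_le_mul_of_nonneg_right (by linarith) hrpw) hS0
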